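/- Let X, Y be disjoint b-subsets of [v], f : X → Y a bijection, and define u on b-subsets of [v] by u(Z) = (-1)^{|Z ∩ Y|} if Z ⊆ X ∪ Y and for all x ∈ X, x ∈ Z implies f(x) ∉ Z, and u(Z) = 0 otherwise. Then u is a null p-ary design for (v-b, b): for every j < b and every j-subset W of [v], Σ_{Z ⊇ W, |Z| = b} u(Z) = 0 in 𝔽_p. -/

import Mathlib

/-- **James' construction of null designs**: given disjoint `b`-subsets `X, Y` of `[v]`
and a bijection `f : X → Y`, the function `u` with `u Z = (-1)^{|Z ∩ Y|}` when
`Z ⊆ X ∪ Y` and no element of `X` lies in `Z` together with its image, and `u Z = 0`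
otherwise, is a null `p`-ary design for `(v-b, b)`. -/
theorem james_null_design (p v b : ℕ) [Fact p.Prime] (hbv : 2 * b ≤ v)
    (X Y : Finset (Fin v)) (hX : X.card = b) (hY : Y.card = b) (hXY : Disjoint X Y)
    (f : {x // x ∈ X} ≃ {y // y ∈ Y})
    (u : Finset (Fin v) → ZMod p)
    (hu1 : ∀ Z : Finset (Fin v),
      (Z ⊆ X ∪ Y ∧ ∀ x (hx : x ∈ X), x ∈ Z → ((f ⟨x, hx⟩ : {y // y ∈ Y}) : Fin v) ∉ Z) →
        u Z = (-1) ^ (Z ∩ Y).card)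
    (hu2 : ∀ Z : Finset (Fin v),
      ¬(Z ⊆ X ∪ Y ∧ ∀ x (hx : x ∈ X), x ∈ Z → ((f ⟨x, hx⟩ : {y // y ∈ Y}) : Fin v) ∉ Z) →
        u Z = 0) :
    ∀ j < b, ∀ W : Finset (Fin v), W.card = j →
      ∑ Z ∈ Finset.univ.filter (fun Z : Finset (Fin v) => W ⊆ Z ∧ Z.card = b), u Z = 0 := by
  classical
  intro j hj W hW
  set P : Finset (Fin v) → Prop := fun Z =>
    Z ⊆ X ∪ Y ∧ ∀ x (hx : x ∈ X), x ∈ Z → ((f ⟨x, hx⟩ : {y // y ∈ Y}) : Fin v) ∉ Z with hPdef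
  -- find a pair (x₀, f x₀) disjoint from W
  obtain ⟨x₀, hx₀X, hx₀W, hfx₀W⟩ :
      ∃ x, ∃ hx : x ∈ X, x ∉ W ∧ ((f ⟨x, hx⟩ : {y // y ∈ Y}) : Fin v) ∉ W := by
    by_contra hcon
    push_neg at hcon
    -- every x ∈ X is "bad": x ∈ W or f x ∈ W
    set S : Finset {x // x ∈ X} :=
      Finset.univ.filter (fun x => (x : Fin v) ∈ W ∨ ((f x : {y // y ∈ Y}) : Fin v) ∈ W) with hS
    have hSuniv : S = Finset.univ := by
      ext x
      simp only [hS, Finset.mem_filter, Finset.mem_univ, true_and, iff_true]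
      by_cases hxW : (x : Fin v) ∈ W
      · exact Or.inl hxW
      · exact Or.inr (by simpa using hcon x x.2 hxW)
    have hcard : S.card ≤ W.card := by
      apply Finset.card_le_card_of_injOn
        (fun (x : {x // x ∈ X}) =>
          if (x : Fin v) ∈ W then (x : Fin v) else ((f x : {y // y ∈ Y}) : Fin v))
      · intro a ha
        rw [hS, Finset.mem_coe, Finset.mem_filter] at ha
        rcases ha.2 with h | h
        · simp [h]
        · by_cases h' : (a : Fin v) ∈ W <;> simp [h', h]
      · intro a ha b hb hab
        simp only at hab
        by_cases haW : (a : Fin v) ∈ W <;> by_cases hbW : (b : Fin v) ∈ W <;>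
          simp only [haW, hbW, if_pos, if_neg, if_true, if_false] at hab
        · exact Subtype.coe_injective hab
        · exact absurd a.2 (by rw [hab]; exact Finset.disjoint_right.mp hXY (f b).2)
        · exact absurd b.2 (by rw [← hab]; exact Finset.disjoint_right.mp hXY (f a).2)
        · exact f.injective (Subtype.coe_injective hab)
    rw [hSuniv, Finset.card_univ, Fintype.card_coe, hX, hW] at hcard
    omega
  set y₀ : Fin v := ((f ⟨x₀, hx₀X⟩ : {y // y ∈ Y}) : Fin v) with hy₀def
  have hy₀Y : y₀ ∈ Y := (f ⟨x₀, hx₀X⟩).2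
  have hx₀Y : x₀ ∉ Y := Finset.disjoint_left.mp hXY hx₀X
  have hy₀X : y₀ ∉ X := Finset.disjoint_right.mp hXY hy₀Y
  have hxy : x₀ ≠ y₀ := fun h => hx₀Y (h ▸ hy₀Y)
  have hb1 : 1 ≤ b := by omega
  -- key: a good Z of size b contains x₀ or y₀
  have key : ∀ Z : Finset (Fin v), P Z → Z.card = b → (x₀ ∈ Z ∨ y₀ ∈ Z) := by
    intro Z hPZ hZc
    obtain ⟨hZsub, hZpair⟩ := hPZ
    set A := Z ∩ X with hA
    set B := Z ∩ Y with hB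
    have hAB : A.card + B.card = b := by
      have h1 : A ∪ B = Z := by
        rw [hA, hB, ← Finset.inter_union_distrib_left, Finset.inter_eq_left.mpr hZsub]
      have h2 : Disjoint A B := hXY.mono Finset.inter_subset_right Finset.inter_subset_right
      rw [← Finset.card_union_of_disjoint h2, h1, hZc]
    set C : Finset (Fin v) := B.attach.image
      (fun y => ((f.symm ⟨y.1, (Finset.mem_inter.mp y.2).2⟩ : {x // x ∈ X}) : Fin v)) with hC
    have hCcard : C.card = B.card := by
      rw [hC, Finset.card_image_of_injective _ ?_, Finset.card_attach]
      intro a b hab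
      have h1 := Subtype.coe_injective hab
      have h2 := f.symm.injective h1
      have h3 : a.1 = b.1 := by simpa using h2
      exact Subtype.ext h3
    have hCX : C ⊆ X := by
      intro c hc
      rw [hC, Finset.mem_image] at hc
      obtain ⟨y, _, rfl⟩ := hc
      exact (f.symm _).2
    have hAC : Disjoint A C := by
      rw [Finset.disjoint_left]
      intro a haA haC
      rw [hC, Finset.mem_image] at haC
      obtain ⟨y, _, hya⟩ := haC
      have haX : a ∈ X := (Finset.mem_inter.mp haA).2
      have haZ : a ∈ Z := (Finset.mem_inter.mp haA).1
      have h1 : f.symm ⟨y.1, (Finset.mem_inter.mp y.2).2⟩ = ⟨a, haX⟩ := Subtype.ext hya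
      have h2 : (⟨y.1, (Finset.mem_inter.mp y.2).2⟩ : {y // y ∈ Y}) = f ⟨a, haX⟩ := by
        rw [← h1, Equiv.apply_symm_apply]
      have h3 : ((f ⟨a, haX⟩ : {y // y ∈ Y}) : Fin v) = y.1 := by rw [← h2]
      have h4 : y.1 ∈ Z := (Finset.mem_inter.mp y.2).1
      exact hZpair a haX haZ (h3 ▸ h4)
    have hACX : A ∪ C = X := by
      apply Finset.eq_of_subset_of_card_le
      · exact Finset.union_subset Finset.inter_subset_right hCX
      · rw [Finset.card_union_of_disjoint hAC, hCcard, hAB, hX]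
    have hx₀AC : x₀ ∈ A ∪ C := hACX ▸ hx₀X
    rcases Finset.mem_union.mp hx₀AC with h | h
    · exact Or.inl (Finset.mem_inter.mp h).1
    · rw [hC, Finset.mem_image] at h
      obtain ⟨y, _, hyx⟩ := h
      have h1 : f.symm ⟨y.1, (Finset.mem_inter.mp y.2).2⟩ = ⟨x₀, hx₀X⟩ := Subtype.ext hyx
      have h2 : (⟨y.1, (Finset.mem_inter.mp y.2).2⟩ : {y // y ∈ Y}) = f ⟨x₀, hx₀X⟩ := by
        rw [← h1, Equiv.apply_symm_apply]
      have h3 : y.1 = y₀ := by rw [hy₀def, ← h2]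
      exact Or.inr (h3 ▸ (Finset.mem_inter.mp y.2).1)
  -- a good Z of size b contains exactly one of x₀, y₀
  have key2 : ∀ Z : Finset (Fin v), P Z → Z.card = b →
      (x₀ ∈ Z ∧ y₀ ∉ Z) ∨ (y₀ ∈ Z ∧ x₀ ∉ Z) := by
    intro Z hPZ hZc
    rcases key Z hPZ hZc with h | h
    · exact Or.inl ⟨h, hPZ.2 x₀ hx₀X h⟩
    · refine Or.inr ⟨h, fun hx => hPZ.2 x₀ hx₀X hx h⟩
  -- the involution
  set g : Finset (Fin v) → Finset (Fin v) := fun Z =>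
    if (x₀ ∈ Z ↔ y₀ ∈ Z) then Z
    else if x₀ ∈ Z then insert y₀ (Z.erase x₀) else insert x₀ (Z.erase y₀) with hg
  have hg_same : ∀ Z, (x₀ ∈ Z ↔ y₀ ∈ Z) → g Z = Z := by
    intro Z h; simp [hg, h]
  have hg1 : ∀ Z, x₀ ∈ Z → y₀ ∉ Z → g Z = insert y₀ (Z.erase x₀) := by
    intro Z h1 h2
    simp only [hg]
    rw [if_neg (by tauto), if_pos h1]
  have hg2 : ∀ Z, y₀ ∈ Z → x₀ ∉ Z → g Z = insert x₀ (Z.erase y₀) := by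
    intro Z h1 h2
    simp only [hg]
    rw [if_neg (by tauto), if_neg h2]
  have hgmem : ∀ Z z, z ≠ x₀ → z ≠ y₀ → (z ∈ g Z ↔ z ∈ Z) := by
    intro Z z h1 h2
    simp only [hg]
    split_ifs with h3 h4 <;>
      simp [Finset.mem_insert, Finset.mem_erase, h1, h2]
  -- ¬ P is preserved by g
  have hgbad : ∀ Z, ¬ P Z → ¬ P (g Z) := by
    intro Z hnP hPg
    by_cases hsame : (x₀ ∈ Z ↔ y₀ ∈ Z)
    · exact hnP (hg_same Z hsame ▸ hPg)
    · apply hnP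
      constructor
      · intro z hz
        by_cases h1 : z = x₀
        · exact Finset.mem_union_left _ (h1 ▸ hx₀X)
        by_cases h2 : z = y₀
        · exact Finset.mem_union_right _ (h2 ▸ hy₀Y)
        · exact hPg.1 ((hgmem Z z h1 h2).mpr hz)
      · intro x hx hxZ hfxZ
        by_cases hxx : x = x₀
        · subst hxx
          have : ((f ⟨x, hx⟩ : {y // y ∈ Y}) : Fin v) = y₀ := by rw [hy₀def]
          exact hsame ⟨fun _ => this ▸ hfxZ, fun hy => hxZ⟩
        · have hx1 : x ≠ y₀ := fun h => hy₀X (h ▸ hx)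
          have hfx : ((f ⟨x, hx⟩ : {y // y ∈ Y}) : Fin v) ≠ y₀ := by
            intro h
            exact hxx (congrArg Subtype.val (f.injective (Subtype.ext (h.trans hy₀def))))
          have hfx2 : ((f ⟨x, hx⟩ : {y // y ∈ Y}) : Fin v) ≠ x₀ := by
            intro h
            exact hx₀Y (h ▸ (f ⟨x, hx⟩).2)
          exact hPg.2 x hx ((hgmem Z x hxx hx1).mpr hxZ)
            ((hgmem Z _ hfx2 hfx).mpr hfxZ)
  -- sign lemma
  have sgn : ∀ m : ℕ, ((-1 : ZMod p)) ^ m + (-1) ^ (m + 1) = 0 := by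
    intro m; rw [pow_succ]; ring
  -- goodness is preserved by g, with sign flip
  have hggood1 : ∀ Z, P Z → x₀ ∈ Z → y₀ ∉ Z → P (insert y₀ (Z.erase x₀)) := by
    intro Z hPZ hx hy
    constructor
    · intro z hz
      rcases Finset.mem_insert.mp hz with h | h
      · exact Finset.mem_union_right _ (h ▸ hy₀Y)
      · exact hPZ.1 (Finset.mem_of_mem_erase h)
    · intro x hxX hxg hfxg
      have hx1 : x ≠ y₀ := fun h => hy₀X (h ▸ hxX)
      have hxZe : x ∈ Z.erase x₀ := by
        rcases Finset.mem_insert.mp hxg with h | h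
        · exact absurd h hx1
        · exact h
      have hxZ : x ∈ Z := Finset.mem_of_mem_erase hxZe
      have hxx0 : x ≠ x₀ := Finset.ne_of_mem_erase hxZe
      rcases Finset.mem_insert.mp hfxg with h | h
      · exact hxx0 (congrArg Subtype.val (f.injective (Subtype.ext (h.trans hy₀def))))
      · exact hPZ.2 x hxX hxZ (Finset.mem_of_mem_erase h)
  have hggood2 : ∀ Z, P Z → y₀ ∈ Z → x₀ ∉ Z → P (insert x₀ (Z.erase y₀)) := by
    intro Z hPZ hy hx
    constructor
    · intro z hz
      rcases Finset.mem_insert.mp hz with h | h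
      · exact Finset.mem_union_left _ (h ▸ hx₀X)
      · exact hPZ.1 (Finset.mem_of_mem_erase h)
    · intro x hxX hxg hfxg
      have hfxy : ((f ⟨x, hxX⟩ : {y // y ∈ Y}) : Fin v) ≠ x₀ :=
        fun h => hx₀Y (h ▸ (f ⟨x, hxX⟩).2)
      have hfxZe : ((f ⟨x, hxX⟩ : {y // y ∈ Y}) : Fin v) ∈ Z.erase y₀ := by
        rcases Finset.mem_insert.mp hfxg with h | h
        · exact absurd h hfxy
        · exact h
      have hfxZ := Finset.mem_of_mem_erase hfxZe
      have hfxy0 : ((f ⟨x, hxX⟩ : {y // y ∈ Y}) : Fin v) ≠ y₀ := Finset.ne_of_mem_erase hfxZe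
      have hxx0 : x ≠ x₀ := by
        intro h
        exact hfxy0 (by rw [hy₀def]; subst h; rfl)
      have hxZ : x ∈ Z := by
        rcases Finset.mem_insert.mp hxg with h | h
        · exact absurd h hxx0
        · exact Finset.mem_of_mem_erase h
      exact hPZ.2 x hxX hxZ hfxZ
  -- intersections with Y
  have hint1 : ∀ Z : Finset (Fin v), y₀ ∉ Z →
      (insert y₀ (Z.erase x₀) ∩ Y).card = (Z ∩ Y).card + 1 := by
    intro Z hy
    have h1 : insert y₀ (Z.erase x₀) ∩ Y = insert y₀ (Z.erase x₀ ∩ Y) :=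
      Finset.insert_inter_of_mem hy₀Y
    have h2 : Z.erase x₀ ∩ Y = Z ∩ Y := by
      ext z
      simp only [Finset.mem_inter, Finset.mem_erase]
      exact ⟨fun h => ⟨h.1.2, h.2⟩, fun h => ⟨⟨fun he => hx₀Y (he ▸ h.2), h.1⟩, h.2⟩⟩
    rw [h1, h2, Finset.card_insert_of_notMem (fun h => hy (Finset.mem_inter.mp h).1)]
  have hint2 : ∀ Z : Finset (Fin v), y₀ ∈ Z →
      ((insert x₀ (Z.erase y₀) ∩ Y).card) + 1 = (Z ∩ Y).card := by
    intro Z hy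
    have h1 : insert x₀ (Z.erase y₀) ∩ Y = Z.erase y₀ ∩ Y :=
      Finset.insert_inter_of_notMem hx₀Y
    have h2 : Z.erase y₀ ∩ Y = (Z ∩ Y).erase y₀ := by
      ext z
      simp only [Finset.mem_inter, Finset.mem_erase]
      tauto
    rw [h1, h2, Finset.card_erase_add_one (Finset.mem_inter.mpr ⟨hy, hy₀Y⟩)]
  -- now apply the involution principle
  apply Finset.sum_involution (fun Z _ => g Z)
  · -- u Z + u (g Z) = 0
    intro Z hZ
    have hZb : Z.card = b := ((Finset.mem_filter.mp hZ).2).2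
    by_cases hPZ : P Z
    · rcases key2 Z hPZ hZb with ⟨hx, hy⟩ | ⟨hy, hx⟩
      · rw [hg1 Z hx hy, hu1 Z hPZ, hu1 _ (hggood1 Z hPZ hx hy), hint1 Z hy]
        exact sgn _
      · rw [hg2 Z hy hx, hu1 Z hPZ, hu1 _ (hggood2 Z hPZ hy hx), ← hint2 Z hy, add_comm]
        exact sgn _
    · rw [hu2 Z hPZ, hu2 _ (hgbad Z hPZ), add_zero]
  · -- g Z ≠ Z when u Z ≠ 0
    intro Z hZ hune
    have hZb : Z.card = b := ((Finset.mem_filter.mp hZ).2).2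
    have hPZ : P Z := by
      by_contra h
      exact hune (hu2 Z h)
    rcases key2 Z hPZ hZb with ⟨hx, hy⟩ | ⟨hy, hx⟩
    · rw [hg1 Z hx hy]
      intro h
      exact hy (h ▸ Finset.mem_insert_self y₀ _)
    · rw [hg2 Z hy hx]
      intro h
      exact hx (h ▸ Finset.mem_insert_self x₀ _)
  · -- g Z ∈ s
    intro Z hZ
    obtain ⟨-, hWZ, hZb⟩ :
        Z ∈ Finset.univ ∧ W ⊆ Z ∧ Z.card = b := by
      simpa [Finset.mem_filter] using hZ
    rw [Finset.mem_filter]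
    refine ⟨Finset.mem_univ _, ?_, ?_⟩
    · intro w hw
      exact (hgmem Z w (fun h => hx₀W (h ▸ hw)) (fun h => hfx₀W (h ▸ hw))).mpr (hWZ hw)
    · by_cases hsame : (x₀ ∈ Z ↔ y₀ ∈ Z)
      · rw [hg_same Z hsame]; exact hZb
      · by_cases hx : x₀ ∈ Z
        · have hy : y₀ ∉ Z := fun h => hsame ⟨fun _ => h, fun _ => hx⟩
          rw [hg1 Z hx hy,
            Finset.card_insert_of_notMem (fun h => hy (Finset.mem_of_mem_erase h)),
            Finset.card_erase_add_one hx, hZb]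
        · have hy : y₀ ∈ Z := by
            by_contra hy
            exact hsame ⟨fun h => absurd h hx, fun h => absurd h hy⟩
          rw [hg2 Z hy hx,
            Finset.card_insert_of_notMem (fun h => hx (Finset.mem_of_mem_erase h)),
            Finset.card_erase_add_one hy, hZb]
  · -- g (g Z) = Z
    intro Z hZ
    by_cases hsame : (x₀ ∈ Z ↔ y₀ ∈ Z)
    · simp only [hg_same Z hsame]
    · by_cases hx : x₀ ∈ Z
      · have hy : y₀ ∉ Z := fun h => hsame ⟨fun _ => h, fun _ => hx⟩
        rw [hg1 Z hx hy]
        have hy' : y₀ ∈ insert y₀ (Z.erase x₀) := Finset.mem_insert_self _ _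
        have hx' : x₀ ∉ insert y₀ (Z.erase x₀) := by
          simp [Finset.mem_insert, Finset.mem_erase, hxy]
        rw [hg2 _ hy' hx', Finset.erase_insert
          (fun h => hy (Finset.mem_of_mem_erase h)), Finset.insert_erase hx]
      · have hy : y₀ ∈ Z := by
          by_contra hy
          exact hsame ⟨fun h => absurd h hx, fun h => absurd h hy⟩
        rw [hg2 Z hy hx]
        have hx' : x₀ ∈ insert x₀ (Z.erase y₀) := Finset.mem_insert_self _ _
        have hy' : y₀ ∉ insert x₀ (Z.erase y₀) := by
          simp only [Finset.mem_insert, Finset.mem_erase]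
          rintro (h | ⟨h, -⟩)
          · exact hxy h.symm
          · exact h rfl
        rw [hg1 _ hx' hy', Finset.erase_insert
          (fun h => hx (Finset.mem_of_mem_erase h)), Finset.insert_erase hy]
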